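/- For 1 < p < 2, define g^p_j = n if j = ⌊n^p⌋ for some n ∈ ℕ, and g^p_j = 0 otherwise. Then the set N = {⌊n^p⌋ : n ∈ ℕ} has density zero and g^p_j = 0 for j ∉ N, but the Cesàro means (1/n) ∑_{k=0}^{n-1} g^p_k diverge to ∞ as n → ∞. -/

import Mathlib

open Filter Finset

/-- A set `N ⊆ ℕ` has density zero. -/
def HasDensityZero (N : Set ℕ) : Prop :=
  Tendsto (fun n => (∑ k ∈ Finset.range n, Set.indicator N (fun _ => (1 : ℝ)) k) / n)
    atTop (nhds 0)

/-- The sequence `g^p`: `g^p j = n` when `j = ⌊n^p⌋`, and `0` otherwise. -/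
noncomputable def gp (p : ℝ) (j : ℕ) : ℕ := sSup {n : ℕ | ⌊(n : ℝ) ^ p⌋ = (j : ℤ)}

lemma floor_nn (p : ℝ) (m : ℕ) : (0:ℤ) ≤ ⌊(m : ℝ) ^ p⌋ :=
  Int.floor_nonneg.2 (by positivity)

lemma aux1 (x p : ℝ) (hx : 0 ≤ x) (hp : 1 ≤ p) : x ^ p + 1 ≤ (x + 1) ^ p := by
  have h := NNReal.rpow_add_rpow_le_add (⟨x, hx⟩ : NNReal) 1 hp
  have h2 := (NNReal.coe_le_coe).2 h
  push_cast at h2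
  have hp0 : (0:ℝ) < p := by linarith
  have h3 := Real.rpow_le_rpow (by positivity) h2 hp0.le
  rwa [one_div, Real.rpow_inv_rpow (by positivity) hp0.ne', Real.one_rpow] at h3

lemma aux2 {p : ℝ} (hp : 1 ≤ p) : StrictMono (fun m : ℕ => ⌊(m : ℝ) ^ p⌋) := by
  apply strictMono_nat_of_lt_succ
  intro m
  have h := aux1 m p (by positivity) hp
  have hf := Int.floor_le ((m:ℝ)^p)
  have h2 : ⌊(m:ℝ)^p⌋ + 1 ≤ ⌊((m+1 : ℕ) : ℝ)^p⌋ := by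
    apply Int.le_floor.2; push_cast; linarith
  omega

lemma gp_fib {p : ℝ} (hp : 1 ≤ p) (m : ℕ) : gp p (⌊(m : ℝ) ^ p⌋).toNat = m := by
  unfold gp
  have hset : {n : ℕ | ⌊(n : ℝ) ^ p⌋ = (((⌊(m : ℝ) ^ p⌋).toNat : ℕ) : ℤ)} = {m} := by
    ext n
    simp only [Set.mem_setOf_eq, Set.mem_singleton_iff,
      Int.toNat_of_nonneg (floor_nn p m)]
    exact ⟨fun h => (aux2 hp).injective h, fun h => by rw [h]⟩
  rw [hset, csSup_singleton]

open Classical in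
lemma card_bound (p : ℝ) (hp1 : 1 < p) (n : ℕ) :
    ((range n).filter (fun k => k ∈ {j : ℕ | ∃ m : ℕ, (j : ℤ) = ⌊(m : ℝ) ^ p⌋})).card
      ≤ ⌊(n:ℝ)^(1/p)⌋₊ + 1 := by
  have hsub : ((range n).filter (fun k => k ∈ {j : ℕ | ∃ m : ℕ, (j : ℤ) = ⌊(m : ℝ) ^ p⌋}))
      ⊆ (range (⌊(n:ℝ)^(1/p)⌋₊ + 1)).image (fun m : ℕ => (⌊(m : ℝ) ^ p⌋).toNat) := by
    intro k hk
    simp only [mem_filter, mem_range, Set.mem_setOf_eq] at hk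
    obtain ⟨hkn, m, hm⟩ := hk
    have hlt : (m:ℝ)^p < n := by
      have : ⌊(m : ℝ) ^ p⌋ < (n : ℤ) := by omega
      exact_mod_cast Int.floor_lt.1 this
    have hmle : (m:ℝ) ≤ (n:ℝ)^(1/p) := by
      rw [one_div]
      have h1 : ((m:ℝ)^p)^p⁻¹ ≤ (n:ℝ)^p⁻¹ :=
        Real.rpow_le_rpow (by positivity) hlt.le (by positivity)
      rwa [Real.rpow_rpow_inv (by positivity) (by positivity)] at h1
    simp only [mem_image, mem_range]
    exact ⟨m, by have := Nat.le_floor hmle; omega, by omega⟩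
  exact le_trans (Finset.card_le_card hsub)
    (le_trans Finset.card_image_le (by simp))

lemma bound_tendsto (p : ℝ) (hp1 : 1 < p) :
    Tendsto (fun n : ℕ => ((n:ℝ)^(1/p) + 1)/n) atTop (nhds 0) := by
  have hp0 : (0:ℝ) < p := by linarith
  have h1 : Tendsto (fun n : ℕ => (n:ℝ)^(1/p - 1)) atTop (nhds 0) := by
    have := (tendsto_rpow_neg_atTop (y := 1 - 1/p) (by
      have : 1/p < 1 := by rw [div_lt_one hp0]; linarith
      linarith)).comp tendsto_natCast_atTop_atTop
    convert this using 2 with n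
    simp only [Function.comp_apply]
    ring_nf
  have h2 : Tendsto (fun n : ℕ => (n:ℝ)⁻¹) atTop (nhds 0) :=
    tendsto_inv_atTop_zero.comp tendsto_natCast_atTop_atTop
  have h3 := h1.add h2
  rw [add_zero] at h3
  apply h3.congr'
  filter_upwards [eventually_ge_atTop 1] with n hn
  have hn0 : (0:ℝ) < n := by exact_mod_cast hn
  rw [add_div, Real.rpow_sub hn0, Real.rpow_one, one_div (n:ℝ)]

lemma sum_lb (p : ℝ) (hp1 : 1 < p) (n : ℕ) :
    ∑ m ∈ range (⌊(n:ℝ)^(1/p)⌋₊), (m:ℝ) ≤ ∑ k ∈ range n, (gp p k : ℝ) := by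
  have hp0 : (0:ℝ) < p := by linarith
  set M := ⌊(n:ℝ)^(1/p)⌋₊ with hM
  set f' := fun m : ℕ => (⌊(m : ℝ) ^ p⌋).toNat with hf'
  have himg : (range M).image f' ⊆ range n := by
    intro k hk
    simp only [mem_image, mem_range] at hk ⊢
    obtain ⟨m, hm, rfl⟩ := hk
    have hmx : (m:ℝ) < (n:ℝ)^(1/p) := by
      have h1 : (m:ℝ) + 1 ≤ M := by exact_mod_cast hm
      have h2 : (M:ℝ) ≤ (n:ℝ)^(1/p) := Nat.floor_le (by positivity)
      linarith
    have hmp : (m:ℝ)^p < n := by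
      have := Real.rpow_lt_rpow (by positivity) hmx hp0
      rwa [one_div, Real.rpow_inv_rpow (by positivity) hp0.ne'] at this
    have : ⌊(m:ℝ)^p⌋ < (n:ℤ) := Int.floor_lt.2 (by exact_mod_cast hmp)
    have h0 := floor_nn p m
    simp only [hf']
    omega
  have hinj : ∀ x ∈ range M, ∀ y ∈ range M, f' x = f' y → x = y := by
    intro x _ y _ hxy
    simp only [hf'] at hxy
    have := congrArg (Int.ofNat) hxy
    simp only [Int.ofNat_eq_coe, Int.toNat_of_nonneg (floor_nn p _)] at this
    exact (aux2 hp1.le).injective this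
  calc ∑ m ∈ range M, (m:ℝ)
      = ∑ m ∈ range M, (gp p (f' m) : ℝ) := by
        refine Finset.sum_congr rfl fun m _ => ?_
        rw [hf', gp_fib hp1.le m]
    _ = ∑ k ∈ (range M).image f', (gp p k : ℝ) := by rw [Finset.sum_image hinj]
    _ ≤ ∑ k ∈ range n, (gp p k : ℝ) :=
        Finset.sum_le_sum_of_subset_of_nonneg himg (fun k _ _ => by positivity)

lemma cesaro (p : ℝ) (hp1 : 1 < p) (hp2 : p < 2) :
    Tendsto (fun n : ℕ => (∑ k ∈ range n, (gp p k : ℝ))/n) atTop atTop := by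
  have hp0 : (0:ℝ) < p := by linarith
  have h2p : 0 < 2/p - 1 := by rw [sub_pos, lt_div_iff₀ hp0]; linarith
  have hrt : Tendsto (fun n : ℕ => (n:ℝ)^(1/p)) atTop atTop :=
    (tendsto_rpow_atTop (by positivity)).comp tendsto_natCast_atTop_atTop
  have htend : Tendsto (fun n : ℕ => (n:ℝ)^(2/p-1)/8) atTop atTop :=
    ((tendsto_rpow_atTop h2p).comp tendsto_natCast_atTop_atTop).atTop_div_const (by norm_num)
  apply tendsto_atTop_mono' atTop ?_ htend
  filter_upwards [hrt.eventually_ge_atTop 4, eventually_ge_atTop 1] with n hx4 hn1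
  set x := (n:ℝ)^(1/p) with hxdef
  have hn0 : (0:ℝ) < n := by exact_mod_cast hn1
  set M := ⌊x⌋₊ with hMdef
  have hMx : x - 1 < (M:ℝ) := Nat.sub_one_lt_floor x
  have hM1 : 1 ≤ M := by
    have : (1:ℝ) ≤ (M:ℝ) := by linarith
    exact_mod_cast this
  have hsum : (∑ m ∈ range M, (m:ℝ)) * 2 = (M:ℝ) * ((M:ℝ) - 1) := by
    have h := congrArg (Nat.cast : ℕ → ℝ) (Finset.sum_range_id_mul_two M)
    push_cast [Nat.cast_sub hM1] at h
    linarith [h]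
  have key : (x-1)*(x-2) ≤ (M:ℝ)*((M:ℝ)-1) :=
    mul_le_mul hMx.le (by linarith) (by linarith) (by linarith)
  have hS : x*x/8 ≤ ∑ m ∈ range M, (m:ℝ) := by nlinarith [key, hsum, hx4]
  have hxx : x*x = (n:ℝ)^(2/p) := by
    rw [hxdef, ← Real.rpow_add hn0]
    norm_num
    ring_nf
  calc (n:ℝ)^(2/p-1)/8 = (x*x/8)/n := by
        rw [Real.rpow_sub hn0, Real.rpow_one, hxx]; ring
    _ ≤ (∑ m ∈ range M, (m:ℝ))/n := by gcongr
    _ ≤ (∑ k ∈ range n, (gp p k : ℝ))/n := by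
        gcongr
        exact sum_lb p hp1 n

/-- For `1 < p < 2`: `N = {⌊n^p⌋}` has density zero and `g^p` vanishes off `N`,
but the Cesàro means of `g^p` diverge to `∞`. -/
theorem stmt8 (p : ℝ) (hp1 : 1 < p) (hp2 : p < 2) :
    HasDensityZero {j : ℕ | ∃ n : ℕ, (j : ℤ) = ⌊(n : ℝ) ^ p⌋} ∧
    (∀ j : ℕ, j ∉ {j : ℕ | ∃ n : ℕ, (j : ℤ) = ⌊(n : ℝ) ^ p⌋} → gp p j = 0) ∧
    Tendsto (fun n => (∑ k ∈ Finset.range n, (gp p k : ℝ)) / n) atTop atTop := by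
  classical
  refine ⟨?_, ?_, cesaro p hp1 hp2⟩
  · unfold HasDensityZero
    set N := {j : ℕ | ∃ n : ℕ, (j : ℤ) = ⌊(n : ℝ) ^ p⌋} with hN
    have hsum : ∀ n : ℕ, ∑ k ∈ range n, Set.indicator N (fun _ => (1:ℝ)) k
        = ((range n).filter (fun k => k ∈ N)).card := by
      intro n
      simp [Set.indicator_apply, Finset.sum_boole]
    apply squeeze_zero' (g := fun n : ℕ => ((n:ℝ)^(1/p) + 1)/n)
    · filter_upwards with n
      rw [hsum]
      positivity
    · filter_upwards with n
      rw [hsum]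
      gcongr
      have h1 := card_bound p hp1 n
      have h2 : ((((range n).filter (fun k => k ∈ N)).card : ℕ) : ℝ)
          ≤ ((⌊(n:ℝ)^(1/p)⌋₊ : ℕ) : ℝ) + 1 := by exact_mod_cast h1
      have h3 : ((⌊(n:ℝ)^(1/p)⌋₊ : ℕ) : ℝ) ≤ (n:ℝ)^(1/p) := Nat.floor_le (by positivity)
      linarith
    · exact bound_tendsto p hp1
  · intro j hj
    have : {n : ℕ | ⌊(n : ℝ) ^ p⌋ = (j : ℤ)} = ∅ := by
      ext n
      simp only [Set.mem_setOf_eq, Set.mem_empty_iff_false, iff_false]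
      intro h
      exact hj ⟨n, h.symm⟩
    rw [gp, this]
    exact csSup_empty
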